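/- If d ∈ D then 3 · d ∈ D. -/

import Mathlib

/-- `φ(p,q) = (p₁−q₁)² + (p₂−q₂)²` for `p, q ∈ ℂ²`. -/
noncomputable def phi2 (p q : Fin 2 → ℂ) : ℂ := (p 0 - q 0) ^ 2 + (p 1 - q 1) ^ 2

/-- `D` is the set of real `d > 0` such that for all `x, y ∈ ℝ²` with `|x−y| = d` there is a
finite set `S` with `{x,y} ⊆ S ⊆ ℝ²` such that every map `f : S → ℂ²` preserving unit
distance (i.e. `φ(f u, f v) = 1` whenever `u, v ∈ S` and `|u−v| = 1`) satisfies
`φ(f x, f y) = d²`. -/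
noncomputable def D : Set ℝ :=
  {d | 0 < d ∧ ∀ x y : EuclideanSpace ℝ (Fin 2), dist x y = d →
    ∃ S : Set (EuclideanSpace ℝ (Fin 2)), S.Finite ∧ x ∈ S ∧ y ∈ S ∧
      ∀ f : EuclideanSpace ℝ (Fin 2) → (Fin 2 → ℂ),
        (∀ u ∈ S, ∀ v ∈ S, dist u v = 1 → phi2 (f u) (f v) = 1) →
        phi2 (f x) (f y) = (d : ℂ) ^ 2}

private lemma phi2_comm (p q : Fin 2 → ℂ) : phi2 p q = phi2 q p := by
  unfold phi2; ring

private def Emk (c0 c1 : ℝ) : EuclideanSpace ℝ (Fin 2) := WithLp.toLp 2 ![c0, c1]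

@[simp] private lemma Emk_zero (c0 c1 : ℝ) : Emk c0 c1 0 = c0 := rfl
@[simp] private lemma Emk_one (c0 c1 : ℝ) : Emk c0 c1 1 = c1 := rfl

private lemma sq_dist (p r : EuclideanSpace ℝ (Fin 2)) :
    (p 0 - r 0) ^ 2 + (p 1 - r 1) ^ 2 = dist p r ^ 2 := by
  rw [EuclideanSpace.dist_eq,
    Real.sq_sqrt (Finset.sum_nonneg fun i _ => sq_nonneg _), Fin.sum_univ_two,
    Real.dist_eq, Real.dist_eq, sq_abs, sq_abs]

private lemma dist_eq_of {p r : EuclideanSpace ℝ (Fin 2)} {d : ℝ} (hd : 0 ≤ d)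
    (h : (p 0 - r 0) ^ 2 + (p 1 - r 1) ^ 2 = d ^ 2) : dist p r = d := by
  have h2 : dist p r ^ 2 = d ^ 2 := by rw [← sq_dist, h]
  calc dist p r = Real.sqrt (dist p r ^ 2) := (Real.sqrt_sq dist_nonneg).symm
  _ = Real.sqrt (d ^ 2) := by rw [h2]
  _ = d := Real.sqrt_sq hd

/-- The key complex rhombus lemma: if `A`, `B` are at `φ`-distance `c` from `X` and from each
other, and `W` is at `φ`-distance `c` from both `A` and `B`, then either `W = X` or
`φ(W, X) = 3c`. -/
private lemma key' {X A B W : Fin 2 → ℂ} {c : ℂ} (hc : c ≠ 0)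
    (ha : phi2 A X = c) (hb : phi2 B X = c) (hab : phi2 A B = c)
    (hwa : phi2 W A = c) (hwb : phi2 W B = c) :
    (W 0 = X 0 ∧ W 1 = X 1) ∨ phi2 W X = 3 * c := by
  simp only [phi2] at ha hb hab hwa hwb ⊢
  have hB : (A 0 - X 0) * (B 0 - X 0) + (A 1 - X 1) * (B 1 - X 1) = c / 2 := by
    linear_combination (ha + hb - hab) / 2
  have hD2 : ((A 0 - X 0) * (B 1 - X 1) - (A 1 - X 1) * (B 0 - X 0)) ^ 2 = 3 / 4 * c ^ 2 := by
    linear_combination ((B 0 - X 0) ^ 2 + (B 1 - X 1) ^ 2) * ha + c * hb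
      - ((A 0 - X 0) * (B 0 - X 0) + (A 1 - X 1) * (B 1 - X 1) + c / 2) * hB
  have hDel : (A 0 - X 0) * (B 1 - X 1) - (A 1 - X 1) * (B 0 - X 0) ≠ 0 := by
    intro h0
    apply hc
    have hcc : c ^ 2 = 0 := by
      linear_combination (4 / 3 : ℂ) * ((A 0 - X 0) * (B 1 - X 1) - (A 1 - X 1) * (B 0 - X 0)) * h0
        - (4 / 3 : ℂ) * hD2
    exact pow_eq_zero_iff two_ne_zero |>.mp hcc
  set α : ℂ := ((W 0 - X 0) * (B 1 - X 1) - (W 1 - X 1) * (B 0 - X 0)) /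
      ((A 0 - X 0) * (B 1 - X 1) - (A 1 - X 1) * (B 0 - X 0)) with hαdef
  set β : ℂ := ((A 0 - X 0) * (W 1 - X 1) - (A 1 - X 1) * (W 0 - X 0)) /
      ((A 0 - X 0) * (B 1 - X 1) - (A 1 - X 1) * (B 0 - X 0)) with hβdef
  have hw0 : W 0 - X 0 = α * (A 0 - X 0) + β * (B 0 - X 0) := by
    rw [hαdef, hβdef, div_mul_eq_mul_div, div_mul_eq_mul_div, ← add_div, eq_div_iff hDel]; ring
  have hw1 : W 1 - X 1 = α * (A 1 - X 1) + β * (B 1 - X 1) := by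
    rw [hαdef, hβdef, div_mul_eq_mul_div, div_mul_eq_mul_div, ← add_div, eq_div_iff hDel]; ring
  have hEa : (W 0 - X 0) * (A 0 - X 0) + (W 1 - X 1) * (A 1 - X 1) = α * c + β * (c / 2) := by
    linear_combination (A 0 - X 0) * hw0 + (A 1 - X 1) * hw1 + α * ha + β * hB
  have hEb : (W 0 - X 0) * (B 0 - X 0) + (W 1 - X 1) * (B 1 - X 1) = α * (c / 2) + β * c := by
    linear_combination (B 0 - X 0) * hw0 + (B 1 - X 1) * hw1 + β * hb + α * hB
  have hBw : (W 0 - X 0) * (A 0 - X 0) + (W 1 - X 1) * (A 1 - X 1) =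
      (W 0 - X 0) * (B 0 - X 0) + (W 1 - X 1) * (B 1 - X 1) := by
    linear_combination (hwb - hwa + ha - hb) / 2
  have hαβ : α = β := by
    have h5 : (α - β) * (c / 2) = 0 := by linear_combination hEb + hBw - hEa
    rcases mul_eq_zero.mp h5 with h6 | h6
    · exact sub_eq_zero.mp h6
    · exact absurd h6 (div_ne_zero hc two_ne_zero)
  have hQ2 : (W 0 - X 0) ^ 2 + (W 1 - X 1) ^ 2 = 2 * (α * c + β * (c / 2)) := by
    linear_combination hwa - ha + 2 * hEa
  have hQ3 : (W 0 - X 0) ^ 2 + (W 1 - X 1) ^ 2 = α ^ 2 * c + β ^ 2 * c + α * β * c := by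
    linear_combination (W 0 - X 0 + α * (A 0 - X 0) + β * (B 0 - X 0)) * hw0
      + (W 1 - X 1 + α * (A 1 - X 1) + β * (B 1 - X 1)) * hw1
      + α ^ 2 * ha + β ^ 2 * hb + 2 * α * β * hB
  have hfac : (α * (α - 1)) * (3 * c) = 0 := by
    linear_combination hQ2 - hQ3 + c * (2 * α + β - 1) * hαβ
  rcases mul_eq_zero.mp hfac with h6 | h6
  · rcases mul_eq_zero.mp h6 with h7 | h7
    · -- α = 0, hence β = 0, hence W = X
      have hβ0 : β = 0 := by rw [← hαβ]; exact h7
      left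
      constructor
      · have h8 : W 0 - X 0 = 0 := by rw [hw0, h7, hβ0]; ring
        exact sub_eq_zero.mp h8
      · have h8 : W 1 - X 1 = 0 := by rw [hw1, h7, hβ0]; ring
        exact sub_eq_zero.mp h8
    · -- α = 1
      right
      linear_combination hQ2 + 3 * c * h7 - c * hαβ
  · exact absurd (by linear_combination h6 / 3 : c = 0) hc

private lemma exists_pts (x q : EuclideanSpace ℝ (Fin 2)) (d : ℝ) (hd0 : 0 ≤ d)
    (hu : (q 0 - x 0) ^ 2 + (q 1 - x 1) ^ 2 = 3 * d ^ 2) :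
    ∃ a b r a' b' : EuclideanSpace ℝ (Fin 2),
      dist x a = d ∧ dist x b = d ∧ dist a b = d ∧ dist q a = d ∧ dist q b = d ∧
      dist r q = d ∧ dist x a' = d ∧ dist x b' = d ∧ dist a' b' = d ∧
      dist r a' = d ∧ dist r b' = d := by
  have hs : (Real.sqrt 3) ^ 2 = 3 := Real.sq_sqrt (by norm_num)
  have ht : (Real.sqrt 11) ^ 2 = 11 := Real.sq_sqrt (by norm_num)
  set s := Real.sqrt 3 with hsdef
  set t := Real.sqrt 11 with htdef
  set u0 := q 0 - x 0 with hu0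
  set u1 := q 1 - x 1 with hu1
  have hq0 : q 0 = x 0 + u0 := by rw [hu0]; ring
  have hq1 : q 1 = x 1 + u1 := by rw [hu1]; ring
  have hu' : (5 * u0 / 6 - t * u1 / 6) ^ 2 + (5 * u1 / 6 + t * u0 / 6) ^ 2 = 3 * d ^ 2 := by
    linear_combination (u0 ^ 2 + u1 ^ 2) / 36 * ht + hu
  refine ⟨Emk (x 0 + u0 / 2 - s * u1 / 6) (x 1 + u1 / 2 + s * u0 / 6),
    Emk (x 0 + u0 / 2 + s * u1 / 6) (x 1 + u1 / 2 - s * u0 / 6),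
    Emk (x 0 + 5 * u0 / 6 - t * u1 / 6) (x 1 + 5 * u1 / 6 + t * u0 / 6),
    Emk (x 0 + (5 * u0 / 6 - t * u1 / 6) / 2 - s * (5 * u1 / 6 + t * u0 / 6) / 6)
        (x 1 + (5 * u1 / 6 + t * u0 / 6) / 2 + s * (5 * u0 / 6 - t * u1 / 6) / 6),
    Emk (x 0 + (5 * u0 / 6 - t * u1 / 6) / 2 + s * (5 * u1 / 6 + t * u0 / 6) / 6)
        (x 1 + (5 * u1 / 6 + t * u0 / 6) / 2 - s * (5 * u0 / 6 - t * u1 / 6) / 6),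
    ?_, ?_, ?_, ?_, ?_, ?_, ?_, ?_, ?_, ?_, ?_⟩
  · apply dist_eq_of hd0
    simp only [Emk_zero, Emk_one]
    linear_combination (u0 ^ 2 + u1 ^ 2) / 36 * hs + hu / 3
  · apply dist_eq_of hd0
    simp only [Emk_zero, Emk_one]
    linear_combination (u0 ^ 2 + u1 ^ 2) / 36 * hs + hu / 3
  · apply dist_eq_of hd0
    simp only [Emk_zero, Emk_one]
    linear_combination (u0 ^ 2 + u1 ^ 2) / 9 * hs + hu / 3
  · apply dist_eq_of hd0
    simp only [Emk_zero, Emk_one, hq0, hq1]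
    linear_combination (u0 ^ 2 + u1 ^ 2) / 36 * hs + hu / 3
  · apply dist_eq_of hd0
    simp only [Emk_zero, Emk_one, hq0, hq1]
    linear_combination (u0 ^ 2 + u1 ^ 2) / 36 * hs + hu / 3
  · apply dist_eq_of hd0
    simp only [Emk_zero, Emk_one, hq0, hq1]
    linear_combination (u0 ^ 2 + u1 ^ 2) / 36 * ht + hu / 3
  · apply dist_eq_of hd0
    simp only [Emk_zero, Emk_one]
    linear_combination ((5 * u0 / 6 - t * u1 / 6) ^ 2 + (5 * u1 / 6 + t * u0 / 6) ^ 2) / 36 * hs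
      + hu' / 3
  · apply dist_eq_of hd0
    simp only [Emk_zero, Emk_one]
    linear_combination ((5 * u0 / 6 - t * u1 / 6) ^ 2 + (5 * u1 / 6 + t * u0 / 6) ^ 2) / 36 * hs
      + hu' / 3
  · apply dist_eq_of hd0
    simp only [Emk_zero, Emk_one]
    linear_combination ((5 * u0 / 6 - t * u1 / 6) ^ 2 + (5 * u1 / 6 + t * u0 / 6) ^ 2) / 9 * hs
      + hu' / 3
  · apply dist_eq_of hd0
    simp only [Emk_zero, Emk_one]
    linear_combination ((5 * u0 / 6 - t * u1 / 6) ^ 2 + (5 * u1 / 6 + t * u0 / 6) ^ 2) / 36 * hs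
      + hu' / 3
  · apply dist_eq_of hd0
    simp only [Emk_zero, Emk_one]
    linear_combination ((5 * u0 / 6 - t * u1 / 6) ^ 2 + (5 * u1 / 6 + t * u0 / 6) ^ 2) / 36 * hs
      + hu' / 3

private lemma sqrt3_mul_mem_D {d : ℝ} (hd : d ∈ D) : Real.sqrt 3 * d ∈ D := by
  obtain ⟨hd0, hD⟩ := hd
  refine ⟨by positivity, ?_⟩
  intro x q hxq
  have hu : (q 0 - x 0) ^ 2 + (q 1 - x 1) ^ 2 = 3 * d ^ 2 := by
    rw [sq_dist q x, dist_comm, hxq, mul_pow, Real.sq_sqrt (by norm_num : (0:ℝ) ≤ 3)]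
  obtain ⟨a, b, r, a', b', h1, h2, h3, h4, h5, h6, h7, h8, h9, h10, h11⟩ :=
    exists_pts x q d hd0.le hu
  obtain ⟨S1, f1, m1x, m1a, P1⟩ := hD x a h1
  obtain ⟨S2, f2, m2x, m2b, P2⟩ := hD x b h2
  obtain ⟨S3, f3, m3a, m3b, P3⟩ := hD a b h3
  obtain ⟨S4, f4, m4q, m4a, P4⟩ := hD q a h4
  obtain ⟨S5, f5, m5q, m5b, P5⟩ := hD q b h5
  obtain ⟨S6, f6, m6r, m6q, P6⟩ := hD r q h6
  obtain ⟨S7, f7, m7x, m7a, P7⟩ := hD x a' h7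
  obtain ⟨S8, f8, m8x, m8b, P8⟩ := hD x b' h8
  obtain ⟨S9, f9, m9a, m9b, P9⟩ := hD a' b' h9
  obtain ⟨S10, f10, m10r, m10a, P10⟩ := hD r a' h10
  obtain ⟨S11, f11, m11r, m11b, P11⟩ := hD r b' h11
  refine ⟨S1 ∪ S2 ∪ S3 ∪ S4 ∪ S5 ∪ S6 ∪ S7 ∪ S8 ∪ S9 ∪ S10 ∪ S11, ?_, ?_, ?_, ?_⟩
  · exact ((((((((((f1.union f2).union f3).union f4).union f5).union f6).union f7).union
      f8).union f9).union f10).union f11)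
  · simp only [Set.mem_union]; tauto
  · simp only [Set.mem_union]; tauto
  · intro f hf
    have hsub : ∀ (T : Set (EuclideanSpace ℝ (Fin 2))),
        T ⊆ S1 ∪ S2 ∪ S3 ∪ S4 ∪ S5 ∪ S6 ∪ S7 ∪ S8 ∪ S9 ∪ S10 ∪ S11 →
        ∀ u ∈ T, ∀ v ∈ T, dist u v = 1 → phi2 (f u) (f v) = 1 :=
      fun T hT u hu' v hv' h1' => hf u (hT hu') v (hT hv') h1'
    have sub1 : S1 ⊆ S1 ∪ S2 ∪ S3 ∪ S4 ∪ S5 ∪ S6 ∪ S7 ∪ S8 ∪ S9 ∪ S10 ∪ S11 := by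
      intro z hz; simp only [Set.mem_union]; tauto
    have sub2 : S2 ⊆ S1 ∪ S2 ∪ S3 ∪ S4 ∪ S5 ∪ S6 ∪ S7 ∪ S8 ∪ S9 ∪ S10 ∪ S11 := by
      intro z hz; simp only [Set.mem_union]; tauto
    have sub3 : S3 ⊆ S1 ∪ S2 ∪ S3 ∪ S4 ∪ S5 ∪ S6 ∪ S7 ∪ S8 ∪ S9 ∪ S10 ∪ S11 := by
      intro z hz; simp only [Set.mem_union]; tauto
    have sub4 : S4 ⊆ S1 ∪ S2 ∪ S3 ∪ S4 ∪ S5 ∪ S6 ∪ S7 ∪ S8 ∪ S9 ∪ S10 ∪ S11 := by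
      intro z hz; simp only [Set.mem_union]; tauto
    have sub5 : S5 ⊆ S1 ∪ S2 ∪ S3 ∪ S4 ∪ S5 ∪ S6 ∪ S7 ∪ S8 ∪ S9 ∪ S10 ∪ S11 := by
      intro z hz; simp only [Set.mem_union]; tauto
    have sub6 : S6 ⊆ S1 ∪ S2 ∪ S3 ∪ S4 ∪ S5 ∪ S6 ∪ S7 ∪ S8 ∪ S9 ∪ S10 ∪ S11 := by
      intro z hz; simp only [Set.mem_union]; tauto
    have sub7 : S7 ⊆ S1 ∪ S2 ∪ S3 ∪ S4 ∪ S5 ∪ S6 ∪ S7 ∪ S8 ∪ S9 ∪ S10 ∪ S11 := by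
      intro z hz; simp only [Set.mem_union]; tauto
    have sub8 : S8 ⊆ S1 ∪ S2 ∪ S3 ∪ S4 ∪ S5 ∪ S6 ∪ S7 ∪ S8 ∪ S9 ∪ S10 ∪ S11 := by
      intro z hz; simp only [Set.mem_union]; tauto
    have sub9 : S9 ⊆ S1 ∪ S2 ∪ S3 ∪ S4 ∪ S5 ∪ S6 ∪ S7 ∪ S8 ∪ S9 ∪ S10 ∪ S11 := by
      intro z hz; simp only [Set.mem_union]; tauto
    have sub10 : S10 ⊆ S1 ∪ S2 ∪ S3 ∪ S4 ∪ S5 ∪ S6 ∪ S7 ∪ S8 ∪ S9 ∪ S10 ∪ S11 := by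
      intro z hz; simp only [Set.mem_union]; tauto
    have sub11 : S11 ⊆ S1 ∪ S2 ∪ S3 ∪ S4 ∪ S5 ∪ S6 ∪ S7 ∪ S8 ∪ S9 ∪ S10 ∪ S11 := by
      intro z hz; simp only [Set.mem_union]; tauto
    have e1 := P1 f (hsub S1 sub1)
    have e2 := P2 f (hsub S2 sub2)
    have e3 := P3 f (hsub S3 sub3)
    have e4 := P4 f (hsub S4 sub4)
    have e5 := P5 f (hsub S5 sub5)
    have e6 := P6 f (hsub S6 sub6)
    have e7 := P7 f (hsub S7 sub7)
    have e8 := P8 f (hsub S8 sub8)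
    have e9 := P9 f (hsub S9 sub9)
    have e10 := P10 f (hsub S10 sub10)
    have e11 := P11 f (hsub S11 sub11)
    have hc : ((d : ℝ) : ℂ) ^ 2 ≠ 0 := pow_ne_zero _ (Complex.ofReal_ne_zero.mpr hd0.ne')
    have R1 := key' hc (by rw [phi2_comm]; exact e1) (by rw [phi2_comm]; exact e2) e3 e4 e5
    have R2 := key' hc (by rw [phi2_comm]; exact e7) (by rw [phi2_comm]; exact e8) e9 e10 e11
    have hcast : ((Real.sqrt 3 * d : ℝ) : ℂ) ^ 2 = 3 * ((d : ℝ) : ℂ) ^ 2 := by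
      have h3 : (Real.sqrt 3 : ℝ) ^ 2 = 3 := Real.sq_sqrt (by norm_num)
      calc ((Real.sqrt 3 * d : ℝ) : ℂ) ^ 2
          = ((Real.sqrt 3 : ℝ) : ℂ) ^ 2 * ((d : ℝ) : ℂ) ^ 2 := by push_cast; ring
        _ = (((Real.sqrt 3 : ℝ) ^ 2 : ℝ) : ℂ) * ((d : ℝ) : ℂ) ^ 2 := by push_cast; ring
        _ = 3 * ((d : ℝ) : ℂ) ^ 2 := by rw [h3]; norm_num
    rcases R1 with ⟨hq0, hq1⟩ | hR1
    · exfalso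
      rcases R2 with ⟨hr0, hr1⟩ | hR2
      · have h0 : phi2 (f r) (f q) = 0 := by simp [phi2, hr0, hr1, hq0, hq1]
        exact hc (e6.symm.trans h0)
      · have h0 : phi2 (f r) (f q) = 3 * ((d : ℝ) : ℂ) ^ 2 := by
          have hrw : phi2 (f r) (f q) = phi2 (f r) (f x) := by simp [phi2, hq0, hq1]
          rw [hrw]; exact hR2
        have hEq : ((d : ℝ) : ℂ) ^ 2 = 3 * ((d : ℝ) : ℂ) ^ 2 := e6.symm.trans h0
        exact hc (by linear_combination - hEq / 2)
    · rw [phi2_comm, hR1]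
      exact hcast.symm

theorem three_mul_mem_D {d : ℝ} (hd : d ∈ D) : 3 * d ∈ D := by
  have h := sqrt3_mul_mem_D (sqrt3_mul_mem_D hd)
  have h3 : Real.sqrt 3 * (Real.sqrt 3 * d) = 3 * d := by
    rw [← mul_assoc, Real.mul_self_sqrt (by norm_num : (0:ℝ) ≤ 3)]
  rwa [h3] at h
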